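/- arXiv:1901.09866 — 3 statements merged into one kernel-verified Lean document; each statement's English description precedes it below -/
import Mathlib

section
/- Let n ≥ 3 and let r_1, …, r_n > 0. For a connecting cycle with angles α_1, …, α_n such that all side lengths l_j are nonzero, the partial derivative of the perimeter L with respect to α_j equals r_{j−1} r_j sin(α_j − α_{j−1}) / l_{j−1} + r_{j+1} r_j sin(α_j − α_{j+1}) / l_j, for each j (indices mod n). -/
open Real

/-- The length of the `j`-th side of the connecting cycle for `n` concentric circles with
radii `r` and polar angles `α`:
`l_j = √(r_j² + r_{j+1}² − 2 r_j r_{j+1} cos(α_{j+1} − α_j))`, indices mod `n`. -/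
noncomputable def sideLen {n : ℕ} [NeZero n] (r α : Fin n → ℝ) (j : Fin n) : ℝ :=
  Real.sqrt (r j ^ 2 + r (j + 1) ^ 2 - 2 * r j * r (j + 1) * Real.cos (α (j + 1) - α j))

/-- The perimeter `L = Σ_j l_j` of the connecting cycle. -/
noncomputable def perim {n : ℕ} [NeZero n] (r α : Fin n → ℝ) : ℝ :=
  ∑ j, sideLen r α j

/-- for `n ≥ 3` concentric circles with positive radii and a connecting cycle
whose side lengths are all nonzero, the partial derivative of the perimeter with respect to
`α_j` equals `r_{j−1} r_j sin(α_j − α_{j−1}) / l_{j−1} + r_{j+1} r_j sin(α_j − α_{j+1}) / l_j`. -/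
theorem stmt_0 {n : ℕ} [NeZero n] (hn : 3 ≤ n) (r : Fin n → ℝ) (hr : ∀ i, 0 < r i)
    (α : Fin n → ℝ) (hl : ∀ j, sideLen r α j ≠ 0) (j : Fin n) :
    HasDerivAt (fun t => perim r (Function.update α j t))
      (r (j - 1) * r j * Real.sin (α j - α (j - 1)) / sideLen r α (j - 1) +
        r (j + 1) * r j * Real.sin (α j - α (j + 1)) / sideLen r α j) (α j) := by
  have hone : (1 : Fin n) ≠ 0 := by
    rw [Ne, Fin.one_eq_zero_iff]
    omega
  have h2 : (j + 1 : Fin n) ≠ j := by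
    intro h
    exact hone (add_eq_left.mp h)
  have h3 : (j - 1 : Fin n) + 1 = j := sub_add_cancel j 1
  have h1 : (j - 1 : Fin n) ≠ j := by
    intro h
    rw [h] at h3
    exact h2 h3
  set D : Fin n → ℝ := fun i =>
    if i = j - 1 then r (j - 1) * r j * Real.sin (α j - α (j - 1)) / sideLen r α (j - 1)
    else if i = j then r (j + 1) * r j * Real.sin (α j - α (j + 1)) / sideLen r α j
    else 0 with hD
  have key : ∀ i : Fin n,
      HasDerivAt (fun t => sideLen r (Function.update α j t) i) (D i) (α j) := by
    intro i
    by_cases hij1 : i = j - 1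
    · subst hij1
      have hfun : (fun t => sideLen r (Function.update α j t) (j - 1)) =
          fun t => Real.sqrt (r (j - 1) ^ 2 + r j ^ 2 -
            2 * r (j - 1) * r j * Real.cos (t - α (j - 1))) := by
        funext t
        simp only [sideLen]
        rw [h3, Function.update_self, Function.update_of_ne h1]
      rw [hfun]
      have hne : r (j - 1) ^ 2 + r j ^ 2 -
          2 * r (j - 1) * r j * Real.cos (α j - α (j - 1)) ≠ 0 := by
        intro h
        apply hl (j - 1)
        simp [sideLen, h3, h]
      have hc : HasDerivAt (fun t : ℝ => t - α (j - 1)) 1 (α j) :=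
        (hasDerivAt_id _).sub_const _
      have hcos := hc.cos
      have hu := (hcos.const_mul (2 * r (j - 1) * r j)).const_sub (r (j - 1) ^ 2 + r j ^ 2)
      have hs := hu.sqrt hne
      have hside : sideLen r α (j - 1) = Real.sqrt (r (j - 1) ^ 2 + r j ^ 2 -
          2 * r (j - 1) * r j * Real.cos (α j - α (j - 1))) := by
        simp [sideLen, h3]
      convert hs using 1
      · simp only [hD, if_pos rfl]
        rw [hside]
        ring
    · by_cases hij2 : i = j
      · rw [hij2]
        have hfun : (fun t => sideLen r (Function.update α j t) j) =
            fun t => Real.sqrt (r j ^ 2 + r (j + 1) ^ 2 -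
              2 * r j * r (j + 1) * Real.cos (α (j + 1) - t)) := by
          funext t
          simp only [sideLen]
          rw [Function.update_self, Function.update_of_ne h2]
        rw [hfun]
        have hne : r j ^ 2 + r (j + 1) ^ 2 -
            2 * r j * r (j + 1) * Real.cos (α (j + 1) - α j) ≠ 0 := by
          intro h
          apply hl j
          simp [sideLen, h]
        have hc : HasDerivAt (fun t : ℝ => α (j + 1) - t) (-1) (α j) := by
          simpa using (hasDerivAt_id (α j)).const_sub (α (j + 1))
        have hcos := hc.cos
        have hu := (hcos.const_mul (2 * r j * r (j + 1))).const_sub (r j ^ 2 + r (j + 1) ^ 2)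
        have hs := hu.sqrt hne
        have hside : sideLen r α j = Real.sqrt (r j ^ 2 + r (j + 1) ^ 2 -
            2 * r j * r (j + 1) * Real.cos (α (j + 1) - α j)) := by
          simp [sideLen]
        convert hs using 1
        · simp only [hD]
          simp only [if_neg (show ¬(j = j - 1) from fun h => h1 h.symm), if_true]
          rw [hside,
            show α j - α (j + 1) = -(α (j + 1) - α j) by ring, Real.sin_neg]
          ring
      · have hi1 : i + 1 ≠ j := fun h => hij1 (eq_sub_of_add_eq h)
        have hfun : (fun t => sideLen r (Function.update α j t) i) =
            fun _ => sideLen r α i := by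
          funext t
          simp [sideLen, Function.update_of_ne hij2, Function.update_of_ne hi1]
        rw [hfun]
        have hDi : D i = 0 := by simp [hD, hij1, hij2]
        rw [hDi]
        exact hasDerivAt_const _ _
  have hsum : HasDerivAt (fun t => perim r (Function.update α j t)) (∑ i, D i) (α j) := by
    unfold perim
    exact HasDerivAt.fun_sum (fun i _ => key i)
  have hval : ∑ i, D i =
      r (j - 1) * r j * Real.sin (α j - α (j - 1)) / sideLen r α (j - 1) +
        r (j + 1) * r j * Real.sin (α j - α (j + 1)) / sideLen r α j := by
    rw [← Finset.sum_subset (Finset.subset_univ ({j - 1, j} : Finset (Fin n)))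
      (by
        intro x _ hx
        simp only [Finset.mem_insert, Finset.mem_singleton, not_or] at hx
        simp [hD, hx.1, hx.2])]
    rw [Finset.sum_pair h1]
    simp [hD, if_neg (show ¬(j = j - 1) from fun h => h1 h.symm)]
  rw [← hval]
  exact hsum
end

section
/- Let n ≥ 3 and let r_1, …, r_n > 0. If α_1, …, α_n is a parade (every α_i ∈ {0, π}) whose consecutive vertices are distinct (x_i ≠ x_{i+1} for all i, where x_i = ±r_i is the signed coordinate of p_i), then all n partial derivatives ∂L/∂α_j vanish at this configuration; that is, every parade is a stationary connecting cycle. -/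
open Real

lemma aux1 {A B a c : ℝ} (ha : Real.sin a = 0) (hc : Real.sin c = 0)
    (h : A - B * Real.cos (c - a) ≠ 0) :
    HasDerivAt (fun t => Real.sqrt (A - B * Real.cos (c - t))) 0 a := by
  have hu : HasDerivAt (fun t : ℝ => c - t) (-1) a := (hasDerivAt_id a).const_sub c
  have hcos := hu.cos
  have hg := (hcos.const_mul B).const_sub A
  have hs := hg.sqrt h
  have hsin : Real.sin (c - a) = 0 := by
    rw [Real.sin_sub, ha, hc]; ring
  convert hs using 1
  rw [hsin]; ring

/-- every parade (all angles `0` or `π`) with distinct consecutive signed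
coordinates `x_i = r_i cos α_i` is a stationary connecting cycle: all partial derivatives
of the perimeter vanish there. -/
theorem stmt_1 {n : ℕ} [NeZero n] (hn : 3 ≤ n) (r : Fin n → ℝ) (hr : ∀ i, 0 < r i)
    (α : Fin n → ℝ) (hparade : ∀ i, α i = 0 ∨ α i = π)
    (hx : ∀ i, r i * Real.cos (α i) ≠ r (i + 1) * Real.cos (α (i + 1))) :
    ∀ j, HasDerivAt (fun t => perim r (Function.update α j t)) 0 (α j) := by
  intro j
  have hone : (1 : Fin n) ≠ 0 := by
    have : (1 : ℕ) < n := by omega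
    simp [Fin.ext_iff, Nat.mod_eq_of_lt this]
  have hsucc : ∀ k : Fin n, k + 1 ≠ k := by
    intro k h
    exact hone (add_left_cancel (a := k) (h.trans (add_zero k).symm))
  have hsin : ∀ i, Real.sin (α i) = 0 := by
    intro i; rcases hparade i with h | h <;> simp [h]
  have hcos2 : ∀ i, Real.cos (α i) ^ 2 = 1 := by
    intro i; rcases hparade i with h | h <;> simp [h]
  have hcossub : ∀ i k, Real.cos (α i - α k) = Real.cos (α i) * Real.cos (α k) := by
    intro i k; rw [Real.cos_sub, hsin, hsin]; ring
  have hne : ∀ k : Fin n,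
      r k ^ 2 + r (k+1) ^ 2 - 2 * r k * r (k+1) * Real.cos (α (k+1) - α k) ≠ 0 := by
    intro k
    rw [hcossub]
    have h1 := hcos2 k
    have h2 := hcos2 (k+1)
    have h3 := hx k
    have h4 : (r k * Real.cos (α k) - r (k+1) * Real.cos (α (k+1))) ≠ 0 := sub_ne_zero.mpr h3
    have h5 : (r k * Real.cos (α k) - r (k+1) * Real.cos (α (k+1)))^2 > 0 := by positivity
    nlinarith [h5]
  have key : HasDerivAt (fun t => ∑ k, sideLen r (Function.update α j t) k)
      (∑ _k : Fin n, (0:ℝ)) (α j) := by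
    apply HasDerivAt.fun_sum
    intro k _
    by_cases hk : k = j
    · subst hk
      have heq : (fun t => sideLen r (Function.update α k t) k) =
          fun t => Real.sqrt (r k ^ 2 + r (k+1) ^ 2 -
            2 * r k * r (k+1) * Real.cos (α (k+1) - t)) := by
        funext t
        simp [sideLen, Function.update_of_ne (hsucc k), Function.update_self]
      rw [heq]
      exact aux1 (hsin k) (hsin (k+1)) (hne k)
    · by_cases hk1 : k + 1 = j
      · subst hk1
        have heq : (fun t => sideLen r (Function.update α (k+1) t) k) =
            fun t => Real.sqrt (r k ^ 2 + r (k+1) ^ 2 -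
              2 * r k * r (k+1) * Real.cos (α k - t)) := by
          funext t
          simp only [sideLen, Function.update_self, Function.update_of_ne hk]
          rw [← Real.cos_neg, neg_sub]
        rw [heq]
        refine aux1 (hsin (k+1)) (hsin k) ?_
        have := hne k
        rwa [← Real.cos_neg, neg_sub] at this
      · have heq : (fun t => sideLen r (Function.update α j t) k) =
            fun _ => sideLen r α k := by
          funext t
          simp [sideLen, Function.update_of_ne hk, Function.update_of_ne hk1]
        rw [heq]
        exact hasDerivAt_const _ _
  simpa [perim] using key
end

section
/- (Theorem 1(a)) Let n ≥ 3 and let r_1, …, r_n > 0. Suppose α_1, …, α_n is a connecting cycle whose consecutive vertices are distinct (l_j ≠ 0 for all j). Let A_j denote the signed area of the triangle (O, p_j, p_{j+1}), i.e. A_j = (1/2) r_j r_{j+1} sin(α_{j+1} − α_j). Then all n partial derivatives ∂L/∂α_j vanish at this configuration if and only if for every j (indices mod n) one has A_{j−1} / l_{j−1} = A_j / l_j (the Fermat condition at each vertex). -/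
open Real

/-- The signed area `A_j = (1/2) r_j r_{j+1} sin(α_{j+1} − α_j)` of the triangle
`(O, p_j, p_{j+1})`. -/
noncomputable def sgnArea {n : ℕ} [NeZero n] (r α : Fin n → ℝ) (j : Fin n) : ℝ :=
  r j * r (j + 1) * Real.sin (α (j + 1) - α j) / 2

lemma perim_hasDerivAt {n : ℕ} [NeZero n] (hn : 3 ≤ n) (r : Fin n → ℝ)
    (α : Fin n → ℝ) (hl : ∀ j, sideLen r α j ≠ 0) (j : Fin n) :
    HasDerivAt (fun t => perim r (Function.update α j t))
      (2 * sgnArea r α (j - 1) / sideLen r α (j - 1)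
        - 2 * sgnArea r α j / sideLen r α j) (α j) := by
  have h10 : (1 : Fin n) ≠ 0 := by
    intro h
    have h' := congrArg Fin.val h
    rw [Fin.val_one', Fin.val_zero] at h'
    rw [Nat.mod_eq_of_lt (by omega)] at h'
    exact one_ne_zero h'
  have hj1 : j + 1 ≠ j := by
    intro h
    exact h10 (by simpa using congrArg (· - j) h)
  have hjm : j - 1 ≠ j := by
    intro h
    exact h10 (by simpa [sub_eq_iff_eq_add] using h)
  have hms : (j - 1) + 1 = j := sub_add_cancel j 1
  have hpos : ∀ k : Fin n,
      0 < r k ^ 2 + r (k + 1) ^ 2 - 2 * r k * r (k + 1) * Real.cos (α (k + 1) - α k) := by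
    intro k
    have := hl k
    rw [sideLen, Real.sqrt_ne_zero'] at this
    exact this
  classical
  set d : Fin n → ℝ := fun k =>
    if k = j then -(2 * sgnArea r α j / sideLen r α j)
    else if k = j - 1 then 2 * sgnArea r α (j - 1) / sideLen r α (j - 1) else 0 with hd
  have hk : ∀ k ∈ Finset.univ,
      HasDerivAt (fun t => sideLen r (Function.update α j t) k) (d k) (α j) := by
    intro k _
    by_cases h1 : k = j
    · subst h1
      have heq : (fun t => sideLen r (Function.update α k t) k) = fun t =>
          Real.sqrt (r k ^ 2 + r (k + 1) ^ 2
            - 2 * r k * r (k + 1) * Real.cos (α (k + 1) - t)) := by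
        funext t
        rw [sideLen, Function.update_of_ne hj1, Function.update_self]
      rw [heq]
      have hin : HasDerivAt (fun t : ℝ =>
          r k ^ 2 + r (k + 1) ^ 2 - 2 * r k * r (k + 1) * Real.cos (α (k + 1) - t))
          (-(2 * r k * r (k + 1)) * Real.sin (α (k + 1) - α k)) (α k) := by
        have ha : HasDerivAt (fun t : ℝ => α (k + 1) - t) (-1) (α k) := by
          simpa using (hasDerivAt_id (α k)).const_sub (α (k + 1))
        have h3 := (ha.cos.const_mul (2 * r k * r (k + 1))).const_sub
          (r k ^ 2 + r (k + 1) ^ 2)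
        refine h3.congr_deriv ?_
        ring
      have hsq := hin.sqrt (ne_of_gt (hpos k))
      have hval : d k = -(2 * r k * r (k + 1)) * Real.sin (α (k + 1) - α k) /
          (2 * Real.sqrt (r k ^ 2 + r (k + 1) ^ 2
            - 2 * r k * r (k + 1) * Real.cos (α (k + 1) - α k))) := by
        simp only [hd, if_pos rfl, sgnArea, sideLen]
        have hlk := hl k
        rw [sideLen] at hlk
        field_simp
      rw [hval]
      exact hsq
    · by_cases h2 : k = j - 1
      · subst h2
        have heq : (fun t => sideLen r (Function.update α j t) (j - 1)) = fun t =>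
            Real.sqrt (r (j - 1) ^ 2 + r j ^ 2
              - 2 * r (j - 1) * r j * Real.cos (t - α (j - 1))) := by
          funext t
          rw [sideLen, hms, Function.update_self, Function.update_of_ne hjm]
        rw [heq]
        have hin : HasDerivAt (fun t : ℝ =>
            r (j - 1) ^ 2 + r j ^ 2 - 2 * r (j - 1) * r j * Real.cos (t - α (j - 1)))
            ((2 * r (j - 1) * r j) * Real.sin (α j - α (j - 1))) (α j) := by
          have ha : HasDerivAt (fun t : ℝ => t - α (j - 1)) 1 (α j) := by
            simpa using (hasDerivAt_id (α j)).sub_const (α (j - 1))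
          have h3 := (ha.cos.const_mul (2 * r (j - 1) * r j)).const_sub
            (r (j - 1) ^ 2 + r j ^ 2)
          refine h3.congr_deriv ?_
          ring
        have hp : (0:ℝ) < r (j - 1) ^ 2 + r j ^ 2
            - 2 * r (j - 1) * r j * Real.cos (α j - α (j - 1)) := by
          have h0 := hpos (j - 1)
          rwa [hms] at h0
        have hsq := hin.sqrt (ne_of_gt hp)
        have hval : d (j - 1) = (2 * r (j - 1) * r j) * Real.sin (α j - α (j - 1)) /
            (2 * Real.sqrt (r (j - 1) ^ 2 + r j ^ 2
              - 2 * r (j - 1) * r j * Real.cos (α j - α (j - 1)))) := by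
          simp only [hd, if_neg hjm, if_pos rfl, sgnArea, sideLen, hms]
          have hlk := hl (j - 1)
          rw [sideLen, hms] at hlk
          field_simp
          simp only [if_true]
          rw [mul_div_assoc', mul_div_right_comm, div_self hlk, one_mul]
        rw [hval]
        exact hsq
      · have hne2 : k + 1 ≠ j := by
          intro h
          exact h2 (by rw [← h]; simp)
        have heq : (fun t => sideLen r (Function.update α j t) k) =
            fun _ => sideLen r α k := by
          funext t
          rw [sideLen, sideLen, Function.update_of_ne h1, Function.update_of_ne hne2]
        rw [heq]
        have hval : d k = 0 := by simp [hd, h1, h2]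
        rw [hval]
        exact hasDerivAt_const _ _
  have hsum := HasDerivAt.sum hk
  have hdsum : ∑ k, d k = 2 * sgnArea r α (j - 1) / sideLen r α (j - 1)
      - 2 * sgnArea r α j / sideLen r α j := by
    rw [← Finset.sum_subset (Finset.subset_univ ({j, j - 1} : Finset (Fin n)))]
    · rw [Finset.sum_insert (by simp [Ne.symm hjm]), Finset.sum_singleton]
      simp only [hd, if_pos rfl, if_neg hjm, eq_self_iff_true, if_true]
      ring
    · intro k _ hk
      simp only [Finset.mem_insert, Finset.mem_singleton, not_or] at hk
      simp [hd, hk.1, hk.2]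
  rw [hdsum] at hsum
  simpa only [perim, Finset.sum_fn] using hsum

/-- Theorem 1(a): a connecting cycle with distinct consecutive vertices is a
critical point of the perimeter iff the Fermat condition `A_{j−1}/l_{j−1} = A_j/l_j` holds
at each vertex. -/
theorem stmt_2 {n : ℕ} [NeZero n] (hn : 3 ≤ n) (r : Fin n → ℝ) (hr : ∀ i, 0 < r i)
    (α : Fin n → ℝ) (hl : ∀ j, sideLen r α j ≠ 0) :
    (∀ j, HasDerivAt (fun t => perim r (Function.update α j t)) 0 (α j)) ↔
      (∀ j : Fin n, sgnArea r α (j - 1) / sideLen r α (j - 1) =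
        sgnArea r α j / sideLen r α j) := by
  constructor
  · intro h j
    have hd := perim_hasDerivAt hn r α hl j
    have heq := (h j).unique hd
    have h1 : 2 * sgnArea r α (j-1) / sideLen r α (j-1)
        = 2 * (sgnArea r α (j-1) / sideLen r α (j-1)) := by ring
    have h2 : 2 * sgnArea r α j / sideLen r α j
        = 2 * (sgnArea r α j / sideLen r α j) := by ring
    rw [h1, h2] at heq
    linarith
  · intro h j
    have hd := perim_hasDerivAt hn r α hl j
    have hz : 2 * sgnArea r α (j - 1) / sideLen r α (j - 1)
        - 2 * sgnArea r α j / sideLen r α j = 0 := by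
      rw [mul_div_assoc, mul_div_assoc, h j]
      ring
    rwa [hz] at hd
end
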